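/- Let N ⊴ G and let (κ,γ) be a Schreier system for (G,U) that is inflated from a Schreier system (κ',γ') for (G/N,U), i.e., κ(g,u) = κ'(ḡ,u) and γ(g,h) = γ'(ḡ,h̄). Then in the extension group G^◇ the map ι : N → G^◇, n ↦ (1,n), is an injective group homomorphism, its image ι(N) commutes elementwise with U × {1}, ι(N) is a normal subgroup of G^◇, and π⁻¹(N) is isomorphic to the direct product U × N. -/

import Mathlib

/-- Type synonym for the underlying set `U × G` of the Schreier extension. -/
def SchreierExt (U G : Type*) : Type _ := U × G

/-- Build an element of the Schreier extension from its components. -/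
def SchreierExt.mk {U G : Type*} (u : U) (g : G) : SchreierExt U G := (u, g)

/-- The `U`-component. -/
def SchreierExt.u {U G : Type*} (x : SchreierExt U G) : U := Prod.fst x

/-- The `G`-component. -/
def SchreierExt.g {U G : Type*} (x : SchreierExt U G) : G := Prod.snd x

/-- if the Schreier system `(κ,γ)` for `(G,U)` is inflated from `G/N`, then in
the extension group `G^◇` the map `ι : n ↦ (1,n)` is an injective homomorphism on `N`, its
image commutes elementwise with `U × {1}`, `ι(N)` is normal in `G^◇`, and `π⁻¹(N)` is
isomorphic to the direct product `U × N` (via `(u,n) ↦ (u,n)`). -/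
theorem inflated_schreier_normal_subgroup {G U : Type*} [Group G] [Group U]
    (N : Subgroup G) (hN : N.Normal)
    (κ : G → U → U) (γ : G → G → U)
    (hκ1 : ∀ u : U, κ 1 u = u)
    (hκmul : ∀ (g : G) (u v : U), κ g (u * v) = κ g u * κ g v)
    (hconj : ∀ (g h : G) (u : U), κ g (κ h u) = γ g h * κ (g * h) u * (γ g h)⁻¹)
    (hcoc : ∀ f g h : G, κ f (γ g h) * γ f (g * h) = γ f g * γ (f * g) h)
    (hnorm : γ 1 1 = 1)
    (hκinf : ∀ (g : G) (n : ↥N) (u : U), κ (g * ↑n) u = κ g u)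
    (hγinf : ∀ (g h : G) (n m : ↥N), γ (g * ↑n) (h * ↑m) = γ g h)
    (inst : Group (SchreierExt U G))
    (hmul : ∀ x y : SchreierExt U G,
      x * y = SchreierExt.mk (x.u * κ x.g y.u * γ x.g y.g) (x.g * y.g)) :
    (∀ n m : ↥N, SchreierExt.mk (1 : U) ((↑(n * m) : G)) =
      SchreierExt.mk (1 : U) (↑n : G) * SchreierExt.mk (1 : U) (↑m : G)) ∧
    Function.Injective (fun n : ↥N => SchreierExt.mk (1 : U) (↑n : G)) ∧
    (∀ (u : U) (n : ↥N),
      SchreierExt.mk u (1 : G) * SchreierExt.mk (1 : U) (↑n : G) =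
        SchreierExt.mk (1 : U) (↑n : G) * SchreierExt.mk u (1 : G)) ∧
    (∀ (x : SchreierExt U G) (n : ↥N), ∃ m : ↥N,
      x * SchreierExt.mk (1 : U) (↑n : G) * x⁻¹ = SchreierExt.mk (1 : U) (↑m : G)) ∧
    (∀ p q : U × ↥N,
      SchreierExt.mk (p.1 * q.1) ((↑(p.2 * q.2) : G)) =
        SchreierExt.mk p.1 (↑p.2 : G) * SchreierExt.mk q.1 (↑q.2 : G)) ∧
    Function.Injective (fun p : U × ↥N => SchreierExt.mk p.1 (↑p.2 : G)) ∧
    Set.range (fun p : U × ↥N => SchreierExt.mk p.1 (↑p.2 : G)) =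
      {x : SchreierExt U G | x.g ∈ N} := by
  have hmul' : ∀ (u v : U) (g h : G),
      SchreierExt.mk u g * SchreierExt.mk v h
        = SchreierExt.mk (u * κ g v * γ g h) (g * h) := by
    intro u v g h
    rw [hmul]
    rfl
  have hκone : ∀ g : G, κ g 1 = 1 := by
    intro g
    have h := hκmul g 1 1
    rw [one_mul] at h
    exact left_eq_mul.mp h
  have hγright1 : ∀ f : G, γ f 1 = 1 := by
    intro f
    have h := hcoc f 1 1
    rw [hnorm, hκone, one_mul, mul_one, mul_one] at h
    exact (mul_eq_left.mp h.symm)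
  have hγleft1 : ∀ h : G, γ 1 h = 1 := by
    intro h
    have h' := hcoc 1 1 h
    rw [hnorm, hκ1, one_mul, one_mul, one_mul] at h'
    exact (mul_eq_left.mp h')
  have hκN : ∀ (n : ↥N) (u : U), κ (↑n) u = u := by
    intro n u
    simpa [hκ1] using hκinf 1 n u
  have hγgN : ∀ (g : G) (n : ↥N), γ g ↑n = 1 := by
    intro g n
    simpa [hγright1] using hγinf g 1 1 n
  have hγNg : ∀ (n : ↥N) (g : G), γ (↑n) g = 1 := by
    intro n g
    simpa [hγleft1] using hγinf 1 g n 1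
  have key : ∀ (u : U) (n : ↥N) (v : U) (m : ↥N),
      SchreierExt.mk u (↑n : G) * SchreierExt.mk v (↑m : G)
        = SchreierExt.mk (u * v) ((↑n * ↑m : G)) := by
    intro u n v m
    rw [hmul', hκN, hγgN, mul_one]
  have mkinj : ∀ (u v : U) (g h : G),
      SchreierExt.mk u g = SchreierExt.mk v h → u = v ∧ g = h := by
    intro u v g h hh
    exact ⟨congrArg Prod.fst hh, congrArg Prod.snd hh⟩
  refine ⟨?_, ?_, ?_, ?_, ?_, ?_, ?_⟩
  · intro n m
    rw [key, one_mul]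
    rfl
  · intro n m h
    have h' : SchreierExt.mk (1 : U) (↑n : G) = SchreierExt.mk (1 : U) (↑m : G) := h
    exact Subtype.ext (mkinj _ _ _ _ h').2
  · intro u n
    have h1 := key u 1 1 n
    have h2 := key 1 n u 1
    simp only [Submonoid.coe_one, mul_one, one_mul] at h1 h2
    rw [h1, h2]
  · intro x n
    obtain ⟨v, g⟩ := x
    have hmem : g * ↑n * g⁻¹ ∈ N := hN.conj_mem _ n.2 g
    refine ⟨⟨g * ↑n * g⁻¹, hmem⟩, ?_⟩
    have hx : (⟨v, g⟩ : SchreierExt U G) = SchreierExt.mk v g := rfl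
    rw [hx]
    have hcomm : SchreierExt.mk v g * SchreierExt.mk (1 : U) (↑n : G)
        = SchreierExt.mk (1 : U) ((g * ↑n * g⁻¹ : G)) * SchreierExt.mk v g := by
      rw [hmul', hmul']
      rw [hκone, hγgN g n, hκN ⟨_, hmem⟩ v, hγNg ⟨_, hmem⟩ g]
      rw [mul_one, mul_one, one_mul, mul_one]
      congr 1
      group
    rw [hcomm, mul_assoc, mul_inv_cancel, mul_one]
  · intro p q
    rw [key]
    rfl
  · intro p q h
    have h' : SchreierExt.mk p.1 (↑p.2 : G) = SchreierExt.mk q.1 (↑q.2 : G) := h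
    obtain ⟨h1, h2⟩ := mkinj _ _ _ _ h'
    exact Prod.ext h1 (Subtype.ext h2)
  · ext x
    constructor
    · rintro ⟨⟨u, n⟩, rfl⟩
      exact n.2
    · intro hx
      exact ⟨(x.u, ⟨x.g, hx⟩), rfl⟩
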